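/- For the Morrison–Pinkham example, the endomorphism of M = coker Ψ induced by the matrix b² + d·c equals multiplication by 0 composed on each side as in the relations: concretely, c·(b² + d·c) = 0 as a map M → R (i.e., the row vector c(b²+dc) lies in the row space of Ψ), and (b² + d·c)·d ≡ 0 as a map R → M (i.e., the column (b²+dc)d lies in the column space of Ψ). -/
import Mathlib


open MvPolynomial

noncomputable section

abbrev S14 : Type := MvPolynomial (Fin 4) ℂ

def w14 : S14 := X 0
def x14 : S14 := X 1
def y14 : S14 := X 2
def z14 : S14 := X 3

def f14 (l : ℂ) : S14 :=
  x14^2 + y14^3 + w14*z14^2 + w14^3*y14 - C l * w14 * y14^2 - C l * w14^4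

abbrev R14 (l : ℂ) : Type := S14 ⧸ Ideal.span {f14 l}

def pi14 (l : ℂ) : S14 →+* R14 l := Ideal.Quotient.mk (Ideal.span {f14 l})

def PsiMP14 (l : ℂ) : Matrix (Fin 4) (Fin 4) S14 :=
  !![x14, y14, z14, -w14;
     -(y14 - C l * w14)*y14, x14, (y14 - C l * w14)*w14, z14;
     -w14*z14, -w14^2, x14, -y14;
     (y14 - C l * w14)*w14^2, -w14*z14, (y14 - C l * w14)*y14, x14]

def bMP14 : Matrix (Fin 4) (Fin 4) S14 :=
  !![0, 0, 1, 0; 0, 0, 0, -1; -w14, 0, 0, 0; 0, w14, 0, 0]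

def dMP14 : Fin 4 → S14 := ![0, 0, 0, 1]

def cMP14 : Fin 4 → S14 := ![x14, -y14, -z14, w14]

def dcMP14 : Matrix (Fin 4) (Fin 4) S14 := Matrix.of fun i j => dMP14 i * cMP14 j

/-- b² + d·c -/
def F14 : Matrix (Fin 4) (Fin 4) S14 := bMP14 * bMP14 + dcMP14

set_option maxHeartbeats 1000000 in
theorem b_sq_plus_dc_relations (l : ℂ) :
    (∃ u : Fin 4 → R14 l,
      Matrix.vecMul u ((PsiMP14 l).map (pi14 l)) =
        Matrix.vecMul (fun j => pi14 l (cMP14 j)) (F14.map (pi14 l))) ∧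
    (∃ u : Fin 4 → R14 l,
      ((PsiMP14 l).map (pi14 l)).mulVec u =
        (F14.map (pi14 l)).mulVec (fun i => pi14 l (dMP14 i))) := by
  have hc : Matrix.vecMul cMP14 F14 = 0 := by
    funext j
    fin_cases j <;>
      simp [Matrix.vecMul, dotProduct, Fin.sum_univ_four, F14, dcMP14, bMP14,
        cMP14, dMP14, Matrix.mul_apply, Matrix.vecHead, Matrix.vecTail] <;> ring
  have hd : F14.mulVec dMP14 = 0 := by
    funext i
    fin_cases i <;>
      simp [Matrix.mulVec, dotProduct, Fin.sum_univ_four, F14, dcMP14, bMP14,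
        cMP14, dMP14, Matrix.mul_apply, Matrix.vecHead, Matrix.vecTail]
  constructor
  · refine ⟨0, ?_⟩
    funext j
    rw [show (fun j => pi14 l (cMP14 j)) = (pi14 l) ∘ cMP14 from rfl,
      ← RingHom.map_vecMul, hc]
    simp [Matrix.vecMul, dotProduct, Fin.sum_univ_four]
  · refine ⟨0, ?_⟩
    funext i
    rw [show (fun i => pi14 l (dMP14 i)) = (pi14 l) ∘ dMP14 from rfl,
      ← RingHom.map_mulVec, hd]
    simp [Matrix.mulVec, dotProduct, Fin.sum_univ_four]

end
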